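/- Let λ̂₁, λ̂₂ ∈ ℝ³ be unit vectors with λ̂₁·λ̂₂ ∉ {-1, 0, 1}, and let V₁, V₂ ∈ ℝ³ satisfy V₁·λ̂₁ = 0 and V₂·λ̂₂ = 0. If for every u ∈ ℝ³ one has (λ̂₂·u)(V₁·u) + (λ̂₁·u)(V₂·u) = 0, then V₁ = 0 and V₂ = 0. -/
import Mathlib


open scoped RealInnerProductSpace

/-- If `λ̂₁, λ̂₂` are unit vectors in ℝ³ with `λ̂₁·λ̂₂ ∉ {-1,0,1}`, and `V₁ ⊥ λ̂₁`, `V₂ ⊥ λ̂₂`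
satisfy `(λ̂₂·u)(V₁·u) + (λ̂₁·u)(V₂·u) = 0` for all `u`, then `V₁ = 0` and `V₂ = 0`. -/
theorem stmt_4 (l₁ l₂ V₁ V₂ : EuclideanSpace ℝ (Fin 3))
    (hl₁ : ‖l₁‖ = 1) (hl₂ : ‖l₂‖ = 1)
    (hdot : ⟪l₁, l₂⟫ ∉ ({-1, 0, 1} : Set ℝ))
    (hV₁ : ⟪V₁, l₁⟫ = 0) (hV₂ : ⟪V₂, l₂⟫ = 0)
    (h : ∀ u : EuclideanSpace ℝ (Fin 3), ⟪l₂, u⟫ * ⟪V₁, u⟫ + ⟪l₁, u⟫ * ⟪V₂, u⟫ = 0) :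
    V₁ = 0 ∧ V₂ = 0 := by
  simp only [Set.mem_insert_iff, Set.mem_singleton_iff, not_or] at hdot
  obtain ⟨hm1, h0, hp1⟩ := hdot
  set c : ℝ := ⟪l₁, l₂⟫ with hc
  have hcc' : ⟪l₂, l₁⟫ = c := by rw [hc, real_inner_comm]
  have hll₁ : ⟪l₁, l₁⟫ = (1:ℝ) := by
    rw [real_inner_self_eq_norm_sq, hl₁]; norm_num
  have hll₂ : ⟪l₂, l₂⟫ = (1:ℝ) := by
    rw [real_inner_self_eq_norm_sq, hl₂]; norm_num
  have hV₁' : ⟪l₁, V₁⟫ = (0:ℝ) := by rw [real_inner_comm]; exact hV₁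
  have hV₂' : ⟪l₂, V₂⟫ = (0:ℝ) := by rw [real_inner_comm]; exact hV₂
  -- polarization: bilinear form vanishes
  have hB : ∀ u v : EuclideanSpace ℝ (Fin 3),
      ⟪l₂, u⟫ * ⟪V₁, v⟫ + ⟪l₂, v⟫ * ⟪V₁, u⟫ + ⟪l₁, u⟫ * ⟪V₂, v⟫ + ⟪l₁, v⟫ * ⟪V₂, u⟫ = 0 := by
    intro u v
    have huv := h (u + v)
    have hu := h u
    have hv := h v
    simp only [inner_add_right] at huv
    ring_nf at huv hu hv ⊢
    linarith
  have hb : ⟪V₁, l₂⟫ = (0:ℝ) := by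
    have h2 := hB l₂ l₂
    simp only [hll₂, hV₂, one_mul, mul_zero, add_zero] at h2
    linarith
  have ha : ⟪V₂, l₁⟫ = (0:ℝ) := by
    have h2 := hB l₁ l₁
    simp only [hll₁, hV₁, one_mul, mul_zero, zero_add, add_zero] at h2
    linarith
  have hb' : ⟪l₂, V₁⟫ = (0:ℝ) := by rw [real_inner_comm]; exact hb
  have ha' : ⟪l₁, V₂⟫ = (0:ℝ) := by rw [real_inner_comm]; exact ha
  have e1 : V₁ + c • V₂ = 0 := by
    rw [← @inner_self_eq_zero ℝ]
    simp only [inner_add_left, inner_add_right, real_inner_smul_left, real_inner_smul_right]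
    have h1 := hB l₂ V₁
    have h3 := hB l₂ V₂
    simp only [hll₂, hcc', hb, hb', hV₂, hV₂', hV₁', hV₁, ha, ha', mul_zero, zero_mul,
      add_zero, zero_add, one_mul, mul_one] at h1 h3
    linear_combination h1 + c * h3
  have e2 : c • V₁ + V₂ = 0 := by
    rw [← @inner_self_eq_zero ℝ]
    simp only [inner_add_left, inner_add_right, real_inner_smul_left, real_inner_smul_right]
    have h1 := hB l₁ V₁
    have h3 := hB l₁ V₂
    simp only [hll₁, hcc', hb, hb', hV₂, hV₂', hV₁', hV₁, ha, ha', mul_zero, zero_mul,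
      add_zero, zero_add, one_mul, mul_one] at h1 h3
    linear_combination c * h1 + h3
  have hc2 : (1 : ℝ) - c ^ 2 ≠ 0 := by
    intro hcc
    have : (1 - c) * (1 + c) = 0 := by ring_nf; linarith
    rcases mul_eq_zero.1 this with h' | h'
    · exact hp1 (by linarith)
    · exact hm1 (by linarith)
  have e3 : ((1 : ℝ) - c ^ 2) • V₂ = 0 := by
    have := congrArg (fun w => c • w) e1
    simp only [smul_add, smul_smul, smul_zero] at this
    have e2' := e2
    calc ((1 : ℝ) - c ^ 2) • V₂
        = (c • V₁ + V₂) - (c • V₁ + (c * c) • V₂) := by module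
      _ = 0 := by rw [e2, this]; simp
  have hV2 : V₂ = 0 := by
    rcases smul_eq_zero.1 e3 with h' | h'
    · exact absurd h' hc2
    · exact h'
  have hV1 : V₁ = 0 := by
    rw [hV2, smul_zero, add_zero] at e1
    exact e1
  exact ⟨hV1, hV2⟩
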